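/- Fan multiplicativity of flattening bounds: if φ = ⊗_{i=1}^m φ_i where φ_i ∈ H_A^{(i)} ⊗ H_B^{(i)} ⊗ H_{C_i} (a fan of m edges all sharing parties A = ⊗_i H_A^{(i)} and B = ⊗_i H_B^{(i)} but with disjoint third parties C_i), then for any generalized flattening maps P_i : H_{C_i} → H_{X_i}⊗H_{Y_i}, the flattening rank factorizes: rk(φ^{(P)}) = Π_{i=1}^m rk(φ_i^{(P_i)}), and hence R(φ) ≥ Π_i rk(φ_i^{(P_i)})/CR(P_i). -/

import Mathlib

open Matrix

namespace FanAux

lemma rank_le_of_eq_mul {m n κ : Type*} [Fintype m] [Fintype n] [Fintype κ]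
    (M : Matrix m n ℂ) (C : Matrix m κ ℂ) (R : Matrix κ n ℂ) (h : M = C * R) :
    M.rank ≤ Fintype.card κ := by
  rw [h]
  exact (Matrix.rank_mul_le_right C R).trans (Matrix.rank_le_card_height R)

lemma exists_factorization {m n : Type*} [Fintype m] [Fintype n] (M : Matrix m n ℂ) :
    ∃ (C : Matrix m (Fin M.rank) ℂ) (R : Matrix (Fin M.rank) n ℂ)
      (X : Matrix (Fin M.rank) m ℂ) (Y : Matrix n (Fin M.rank) ℂ),
      M = C * R ∧ X * C = 1 ∧ R * Y = 1 := by
  classical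
  set r := M.rank with hr
  set V := LinearMap.range M.mulVecLin with hV
  have hfin : Module.finrank ℂ V = r := rfl
  let b : Module.Basis (Fin r) ℂ V := Module.finBasisOfFinrankEq ℂ V hfin
  let Cl : (Fin r → ℂ) →ₗ[ℂ] (m → ℂ) :=
    V.subtype ∘ₗ (b.equivFun.symm : (Fin r → ℂ) ≃ₗ[ℂ] V).toLinearMap
  let Rl : (n → ℂ) →ₗ[ℂ] (Fin r → ℂ) :=
    (b.equivFun : V ≃ₗ[ℂ] (Fin r → ℂ)).toLinearMap ∘ₗ M.mulVecLin.rangeRestrict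
  have hCR : Cl ∘ₗ Rl = M.mulVecLin := by
    refine LinearMap.ext fun v => ?_
    simp only [Cl, Rl, LinearMap.comp_apply, LinearEquiv.coe_coe,
      LinearEquiv.symm_apply_apply]
    rfl
  have hCinj : Function.Injective Cl := by
    simpa [Cl] using V.injective_subtype.comp b.equivFun.symm.injective
  have hRsurj : Function.Surjective Rl := by
    simpa [Rl] using b.equivFun.surjective.comp M.mulVecLin.surjective_rangeRestrict
  obtain ⟨g, hg⟩ := Cl.exists_leftInverse_of_injective (LinearMap.ker_eq_bot.mpr hCinj)
  obtain ⟨h, hh⟩ := Rl.exists_rightInverse_of_surjective (LinearMap.range_eq_top.mpr hRsurj)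
  refine ⟨LinearMap.toMatrix' Cl, LinearMap.toMatrix' Rl, LinearMap.toMatrix' g,
    LinearMap.toMatrix' h, ?_, ?_, ?_⟩
  · rw [← LinearMap.toMatrix'_comp, hCR]
    exact (LinearMap.toMatrix'_toLin' M).symm ▸ rfl
  · rw [← LinearMap.toMatrix'_comp, hg, LinearMap.toMatrix'_id]
  · rw [← LinearMap.toMatrix'_comp, hh, LinearMap.toMatrix'_id]

lemma rank_submatrix_equiv_le {m n m' n' : Type*} [Fintype m] [Fintype n] [Fintype n']
    (M : Matrix m n ℂ) (e₁ : m' → m) (e₂ : n' ≃ n) :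
    (M.submatrix e₁ e₂).rank ≤ M.rank := by
  rw [Matrix.rank, Matrix.rank, Matrix.mulVecLin_submatrix, LinearMap.range_comp,
    LinearMap.range_comp,
    show LinearMap.funLeft ℂ ℂ e₂.symm =
      (LinearEquiv.funCongrLeft ℂ ℂ e₂.symm : (n' → ℂ) →ₗ[ℂ] (n → ℂ)) from rfl,
    LinearEquiv.range, Submodule.map_top]
  exact Submodule.finrank_map_le _ _

lemma rank_submatrix_equiv {m n m' n' : Type*} [Fintype m] [Fintype n] [Fintype m'] [Fintype n']
    (M : Matrix m n ℂ) (e₁ : m' ≃ m) (e₂ : n' ≃ n) :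
    (M.submatrix e₁ e₂).rank = M.rank := by
  refine le_antisymm (rank_submatrix_equiv_le M e₁ e₂) ?_
  have h : M = (M.submatrix e₁ e₂).submatrix e₁.symm e₂.symm := by
    ext a b; simp
  calc M.rank = ((M.submatrix e₁ e₂).submatrix e₁.symm e₂.symm).rank := by rw [← h]
    _ ≤ (M.submatrix e₁ e₂).rank := rank_submatrix_equiv_le _ _ _

lemma rank_add_le {m n : Type*} [Fintype m] [Fintype n] (A B : Matrix m n ℂ) :
    (A + B).rank ≤ A.rank + B.rank := by
  have hle : LinearMap.range (A + B).mulVecLin ≤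
      LinearMap.range A.mulVecLin ⊔ LinearMap.range B.mulVecLin := by
    rintro x ⟨v, rfl⟩
    exact Submodule.mem_sup.mpr ⟨A.mulVecLin v, ⟨v, rfl⟩, B.mulVecLin v, ⟨v, rfl⟩,
      by simp [Matrix.add_mulVec, Matrix.mulVecLin]⟩
  exact (Submodule.finrank_mono hle).trans
    (Submodule.finrank_add_le_finrank_add_finrank _ _)

lemma rank_sum_le {m n : Type*} [Fintype m] [Fintype n] {T : Type*} (s : Finset T)
    (M : T → Matrix m n ℂ) :
    (∑ t ∈ s, M t).rank ≤ ∑ t ∈ s, (M t).rank := by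
  classical
  induction s using Finset.induction with
  | empty => simp
  | insert t s h ih =>
    rw [Finset.sum_insert h, Finset.sum_insert h]
    exact (rank_add_le _ _).trans (add_le_add_right ih _)

set_option linter.unusedSectionVars false

variable {ι : Type*} [Fintype ι] [DecidableEq ι] {a b c : ι → Type*}

/-- entrywise pi-Kronecker product -/
def piKron (N : ∀ i, Matrix (a i) (b i) ℂ) : Matrix (∀ i, a i) (∀ i, b i) ℂ :=
  Matrix.of fun p q => ∏ i, N i (p i) (q i)

lemma piKron_apply (N : ∀ i, Matrix (a i) (b i) ℂ) (p q) :
    piKron N p q = ∏ i, N i (p i) (q i) := rfl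

lemma piKron_mul [∀ i, Fintype (b i)]
    (M : ∀ i, Matrix (a i) (b i) ℂ) (N : ∀ i, Matrix (b i) (c i) ℂ) :
    piKron M * piKron N = piKron (fun i => M i * N i) := by
  ext p q
  simp only [Matrix.mul_apply, piKron_apply, Finset.prod_univ_sum,
    Fintype.piFinset_univ, Finset.prod_mul_distrib]

lemma piKron_one [∀ i, DecidableEq (a i)] :
    piKron (fun i => (1 : Matrix (a i) (a i) ℂ)) = 1 := by
  ext p q
  simp only [piKron_apply, Matrix.one_apply]
  by_cases h : p = q
  · subst h; simp
  · rw [if_neg h]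
    obtain ⟨i, hi⟩ := Function.ne_iff.mp h
    exact Finset.prod_eq_zero (Finset.mem_univ i) (if_neg hi)

lemma rank_piKron [∀ i, Fintype (a i)] [∀ i, Fintype (b i)]
    (N : ∀ i, Matrix (a i) (b i) ℂ) :
    (piKron N).rank = ∏ i, (N i).rank := by
  classical
  choose C R X Y hCR hXC hRY using fun i => exists_factorization (N i)
  have hN : (fun i => C i * R i) = N := funext fun i => (hCR i).symm
  have hfact : piKron N = piKron C * piKron R := by
    rw [piKron_mul]; exact (congrArg piKron hN).symm
  refine le_antisymm ?_ ?_
  · calc (piKron N).rank ≤ Fintype.card (∀ i, Fin (N i).rank) :=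
        rank_le_of_eq_mul _ _ _ hfact
      _ = ∏ i, (N i).rank := by simp [Fintype.card_pi]
  · have hmid : ∀ i, X i * N i * Y i = 1 := fun i => by
      calc X i * N i * Y i = X i * (C i * R i) * Y i :=
            congrArg (fun Z => X i * Z * Y i) (hCR i)
        _ = (X i * C i) * (R i * Y i) := by
            rw [← Matrix.mul_assoc, Matrix.mul_assoc (X i * C i)]
        _ = 1 := by rw [hXC i, hRY i, Matrix.one_mul]
    have h1 : piKron X * piKron N * piKron Y = 1 := by
      rw [piKron_mul, piKron_mul]
      rw [show (fun i => X i * N i * Y i) = fun i => (1 : Matrix (Fin (N i).rank) (Fin (N i).rank) ℂ)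
        from funext fun i => hmid i]
      exact piKron_one
    calc ∏ i, (N i).rank = Fintype.card (∀ i, Fin (N i).rank) := by simp [Fintype.card_pi]
      _ = (1 : Matrix (∀ i, Fin (N i).rank) (∀ i, Fin (N i).rank) ℂ).rank :=
        (Matrix.rank_one).symm
      _ = (piKron X * piKron N * piKron Y).rank := by rw [h1]
      _ ≤ (piKron X * piKron N).rank := Matrix.rank_mul_le_left _ _
      _ ≤ (piKron N).rank := Matrix.rank_mul_le_right _ _

end FanAux




/-- The commutative rank `CR(P)` of a generalized flattening map
`P : H_C → H_X ⊗ H_Y` (in coordinates): the maximum Schmidt rank of `P c`. -/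
noncomputable def commRank {γ δ ρ : Type*} [Fintype δ] [Fintype ρ]
    (P : (γ → ℂ) →ₗ[ℂ] (δ × ρ → ℂ)) : ℕ :=
  ⨆ c : γ → ℂ, (Matrix.of fun (d : δ) (r : ρ) => P c (d, r)).rank

/-- The generalized flattening `(1 ⊗ P) φᵢ` of a single edge tensor
`φᵢ ∈ H_A ⊗ H_B ⊗ H_C`, as a 2-tensor (matrix) between `A X` and `B Y`. -/
noncomputable def edgeFlattening {α β γ δ ρ : Type*} [Fintype γ] [DecidableEq γ]
    (P : (γ → ℂ) →ₗ[ℂ] (δ × ρ → ℂ)) (φ : α → β → γ → ℂ) :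
    Matrix (α × δ) (β × ρ) ℂ :=
  Matrix.of fun p q => ∑ g : γ, P (Pi.single g 1) (p.2, q.2) * φ p.1 q.1 g

/-- The generalized multiflattening of `φ ∈ H_A ⊗ H_B ⊗ ⨂ᵢ H_{Cᵢ}` (in
coordinates), as a matrix between `A X₁…X_m` and `B Y₁…Y_m`. -/
noncomputable def multiFlattening {ι α β : Type*} [Fintype ι] [DecidableEq ι]
    {γ δ ρ : ι → Type*} [∀ i, Fintype (γ i)] [∀ i, DecidableEq (γ i)]
    (P : ∀ i, (γ i → ℂ) →ₗ[ℂ] (δ i × ρ i → ℂ))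
    (φ : α → β → (∀ i, γ i) → ℂ) :
    Matrix (α × ∀ i, δ i) (β × ∀ i, ρ i) ℂ :=
  Matrix.of fun p q =>
    ∑ g : ∀ i, γ i, (∏ i, P i (Pi.single (g i) 1) (p.2 i, q.2 i)) * φ p.1 q.1 g

/-- Fan multiplicativity of flattening bounds: for a fan `φ = ⊗ᵢ φᵢ` of edges all
sharing parties `A = ⊗ᵢ Aᵢ` and `B = ⊗ᵢ Bᵢ` but with disjoint third parties `Cᵢ`,
the flattening rank factorizes, `rk(φ^{(P)}) = ∏ᵢ rk(φᵢ^{(Pᵢ)})`, and hence any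
decomposition of `φ` into `s` simple tensors (w.r.t. the parties `A, B, C₁, …, C_m`)
satisfies `∏ᵢ rk(φᵢ^{(Pᵢ)}) ≤ s · ∏ᵢ CR(Pᵢ)`. -/
theorem fan_flattening_multiplicative {ι : Type*} [Fintype ι] [DecidableEq ι]
    {A B γ δ ρ : ι → Type*} [∀ i, Fintype (A i)] [∀ i, Fintype (B i)]
    [∀ i, Fintype (γ i)] [∀ i, DecidableEq (γ i)] [∀ i, Fintype (δ i)]
    [∀ i, Fintype (ρ i)]
    (P : ∀ i, (γ i → ℂ) →ₗ[ℂ] (δ i × ρ i → ℂ))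
    (φ : ∀ i, A i → B i → γ i → ℂ) :
    (multiFlattening P
          (fun (a : ∀ i, A i) (b : ∀ i, B i) (g : ∀ i, γ i) =>
            ∏ i, φ i (a i) (b i) (g i))).rank =
      ∏ i, (edgeFlattening (P i) (φ i)).rank ∧
    ∀ (s : ℕ) (u : Fin s → (∀ i, A i) → ℂ) (v : Fin s → (∀ i, B i) → ℂ)
      (w : Fin s → ∀ i, γ i → ℂ),
      (∀ (a : ∀ i, A i) (b : ∀ i, B i) (g : ∀ i, γ i), (∏ i, φ i (a i) (b i) (g i)) = ∑ t, u t a * v t b * ∏ i, w t i (g i)) →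
      ∏ i, (edgeFlattening (P i) (φ i)).rank ≤ s * ∏ i, commRank (P i) := by
  classical
  -- reindexing equivalences
  let eA : ((∀ i, A i) × (∀ i, δ i)) ≃ (∀ i, A i × δ i) :=
    ⟨fun p i => (p.1 i, p.2 i), fun f => (fun i => (f i).1, fun i => (f i).2),
      fun p => rfl, fun f => rfl⟩
  let eB : ((∀ i, B i) × (∀ i, ρ i)) ≃ (∀ i, B i × ρ i) :=
    ⟨fun p i => (p.1 i, p.2 i), fun f => (fun i => (f i).1, fun i => (f i).2),
      fun p => rfl, fun f => rfl⟩
  have hkey : multiFlattening P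
        (fun (a : ∀ i, A i) (b : ∀ i, B i) (g : ∀ i, γ i) =>
          ∏ i, φ i (a i) (b i) (g i)) =
      (FanAux.piKron (fun i => edgeFlattening (P i) (φ i))).submatrix eA eB := by
    ext p q
    simp only [multiFlattening, Matrix.of_apply, Matrix.submatrix_apply,
      FanAux.piKron_apply, edgeFlattening]
    rw [Finset.prod_univ_sum, Fintype.piFinset_univ]
    exact Finset.sum_congr rfl fun g _ => (Finset.prod_mul_distrib).symm
  have h1 : (multiFlattening P
        (fun (a : ∀ i, A i) (b : ∀ i, B i) (g : ∀ i, γ i) =>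
          ∏ i, φ i (a i) (b i) (g i))).rank =
      ∏ i, (edgeFlattening (P i) (φ i)).rank := by
    rw [hkey, FanAux.rank_submatrix_equiv, FanAux.rank_piKron]
  refine ⟨h1, ?_⟩
  intro s u v w h
  rw [← h1]
  have hP : ∀ (i : ι) (wi : γ i → ℂ) (d : δ i) (r : ρ i),
      ∑ c : γ i, P i (Pi.single c 1) (d, r) * wi c = P i wi (d, r) := by
    intro i wi d r
    have hw : wi = ∑ c, wi c • (Pi.single c 1 : γ i → ℂ) := by
      funext x
      simp [Finset.sum_apply, Pi.single_apply]
    conv_rhs => rw [hw, map_sum]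
    rw [Finset.sum_apply]
    refine Finset.sum_congr rfl fun c _ => ?_
    rw [_root_.map_smul, Pi.smul_apply, smul_eq_mul, mul_comm]
  let M : Fin s → Matrix ((∀ i, A i) × (∀ i, δ i)) ((∀ i, B i) × (∀ i, ρ i)) ℂ :=
    fun t => Matrix.of fun p q => u t p.1 * v t q.1 * ∏ i, P i (w t i) (p.2 i, q.2 i)
  have hterm : ∀ (t : Fin s) (p : (∀ i, A i) × (∀ i, δ i)) (q : (∀ i, B i) × (∀ i, ρ i)),
      ∑ g : ∀ i, γ i, (∏ i, P i (Pi.single (g i) 1) (p.2 i, q.2 i)) *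
          (u t p.1 * v t q.1 * ∏ i, w t i (g i)) = M t p q := by
    intro t p q
    calc ∑ g : ∀ i, γ i, (∏ i, P i (Pi.single (g i) 1) (p.2 i, q.2 i)) *
            (u t p.1 * v t q.1 * ∏ i, w t i (g i))
        = ∑ g : ∀ i, γ i, (u t p.1 * v t q.1) *
            ∏ i, (P i (Pi.single (g i) 1) (p.2 i, q.2 i) * w t i (g i)) := by
          refine Finset.sum_congr rfl fun g _ => ?_
          rw [Finset.prod_mul_distrib]; ring
      _ = (u t p.1 * v t q.1) *
            ∑ g : ∀ i, γ i, ∏ i, (P i (Pi.single (g i) 1) (p.2 i, q.2 i) * w t i (g i)) :=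
          (Finset.mul_sum _ _ _).symm
      _ = (u t p.1 * v t q.1) *
            ∏ i, ∑ c : γ i, P i (Pi.single c 1) (p.2 i, q.2 i) * w t i c := by
          rw [Finset.prod_univ_sum, Fintype.piFinset_univ]
      _ = u t p.1 * v t q.1 * ∏ i, P i (w t i) (p.2 i, q.2 i) := by
          rw [Finset.prod_congr rfl fun i _ => hP i (w t i) (p.2 i) (q.2 i)]
      _ = M t p q := rfl
  have hsum : multiFlattening P
        (fun (a : ∀ i, A i) (b : ∀ i, B i) (g : ∀ i, γ i) =>
          ∏ i, φ i (a i) (b i) (g i)) = ∑ t, M t := by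
    ext p q
    rw [Matrix.sum_apply]
    show ∑ g : ∀ i, γ i, (∏ i, P i (Pi.single (g i) 1) (p.2 i, q.2 i)) *
        (∏ i, φ i (p.1 i) (q.1 i) (g i)) = _
    calc ∑ g : ∀ i, γ i, (∏ i, P i (Pi.single (g i) 1) (p.2 i, q.2 i)) *
            (∏ i, φ i (p.1 i) (q.1 i) (g i))
        = ∑ g : ∀ i, γ i, ∑ t, (∏ i, P i (Pi.single (g i) 1) (p.2 i, q.2 i)) *
            (u t p.1 * v t q.1 * ∏ i, w t i (g i)) := by
          refine Finset.sum_congr rfl fun g _ => ?_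
          rw [h p.1 q.1 g, Finset.mul_sum]
      _ = ∑ t, ∑ g : ∀ i, γ i, (∏ i, P i (Pi.single (g i) 1) (p.2 i, q.2 i)) *
            (u t p.1 * v t q.1 * ∏ i, w t i (g i)) := Finset.sum_comm
      _ = ∑ t, M t p q := Finset.sum_congr rfl fun t _ => hterm t p q
  have hMt : ∀ t : Fin s, (M t).rank ≤ ∏ i, commRank (P i) := by
    intro t
    set Q : ∀ i, Matrix (δ i) (ρ i) ℂ :=
      fun i => Matrix.of fun d r => P i (w t i) (d, r) with hQ
    have hQle : ∀ i, (Q i).rank ≤ commRank (P i) := by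
      intro i
      have hbdd : BddAbove (Set.range fun c : γ i → ℂ =>
          (Matrix.of fun (d : δ i) (r : ρ i) => P i c (d, r)).rank) := by
        refine ⟨Fintype.card (δ i), ?_⟩
        rintro _ ⟨c, rfl⟩
        exact Matrix.rank_le_card_height _
      exact le_ciSup hbdd (w t i)
    obtain ⟨C, R, X, Y, hCR, hXC, hRY⟩ :
        ∃ (C : ∀ i, Matrix (δ i) (Fin (Q i).rank) ℂ)
          (R : ∀ i, Matrix (Fin (Q i).rank) (ρ i) ℂ)
          (X : ∀ i, Matrix (Fin (Q i).rank) (δ i) ℂ)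
          (Y : ∀ i, Matrix (ρ i) (Fin (Q i).rank) ℂ),
          (∀ i, Q i = C i * R i) ∧ (∀ i, X i * C i = 1) ∧ (∀ i, R i * Y i = 1) := by
      choose C R X Y h1' h2' h3' using fun i => FanAux.exists_factorization (Q i)
      exact ⟨C, R, X, Y, h1', h2', h3'⟩
    let Ct : Matrix ((∀ i, A i) × (∀ i, δ i)) (∀ i, Fin (Q i).rank) ℂ :=
      Matrix.of fun p k => u t p.1 * ∏ i, C i (p.2 i) (k i)
    let Rt : Matrix (∀ i, Fin (Q i).rank) ((∀ i, B i) × (∀ i, ρ i)) ℂ :=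
      Matrix.of fun k q => v t q.1 * ∏ i, R i (k i) (q.2 i)
    have hfac : M t = Ct * Rt := by
      ext p q
      show u t p.1 * v t q.1 * ∏ i, P i (w t i) (p.2 i, q.2 i) = _
      calc u t p.1 * v t q.1 * ∏ i, P i (w t i) (p.2 i, q.2 i)
          = u t p.1 * v t q.1 * ∏ i, (C i * R i) (p.2 i) (q.2 i) := by
            have hper : ∀ i, P i (w t i) (p.2 i, q.2 i) = (C i * R i) (p.2 i) (q.2 i) := by
              intro i
              rw [← hCR i]
              rfl
            rw [Finset.prod_congr rfl fun i _ => hper i]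
        _ = u t p.1 * v t q.1 *
              ∏ i, ∑ k : Fin (Q i).rank, C i (p.2 i) k * R i k (q.2 i) := by
            rw [Finset.prod_congr rfl fun i _ => Matrix.mul_apply]
        _ = u t p.1 * v t q.1 *
              ∑ k : ∀ i, Fin (Q i).rank, ∏ i, (C i (p.2 i) (k i) * R i (k i) (q.2 i)) := by
            rw [Finset.prod_univ_sum, Fintype.piFinset_univ]
        _ = ∑ k : ∀ i, Fin (Q i).rank,
              (u t p.1 * ∏ i, C i (p.2 i) (k i)) * (v t q.1 * ∏ i, R i (k i) (q.2 i)) := by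
            rw [Finset.mul_sum]
            refine Finset.sum_congr rfl fun k _ => ?_
            rw [Finset.prod_mul_distrib]; ring
        _ = (Ct * Rt) p q := by rw [Matrix.mul_apply]; rfl
    calc (M t).rank ≤ Fintype.card (∀ i, Fin (Q i).rank) :=
          FanAux.rank_le_of_eq_mul (M t) Ct Rt hfac
      _ = ∏ i, (Q i).rank := by simp
      _ ≤ ∏ i, commRank (P i) := Finset.prod_le_prod' fun i _ => hQle i
  calc (multiFlattening P
        (fun (a : ∀ i, A i) (b : ∀ i, B i) (g : ∀ i, γ i) =>
          ∏ i, φ i (a i) (b i) (g i))).rank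
      = (∑ t, M t).rank := by rw [hsum]
    _ ≤ ∑ t, (M t).rank := FanAux.rank_sum_le _ _
    _ ≤ ∑ _t : Fin s, ∏ i, commRank (P i) :=
        Finset.sum_le_sum fun t _ => hMt t
    _ = s * ∏ i, commRank (P i) := by
        rw [Finset.sum_const, Finset.card_univ, Fintype.card_fin, smul_eq_mul]
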